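/- If G is an acyclic directed graph (with forward, backward, and bidirectional edges permitted), then there exists an acyclic directed graph G* all of whose edges are forward edges such that the flow polytope F_G is integrally equivalent to the flow polytope F_{G*}. -/

import Mathlib

namespace FP

/-- The three possible types of an edge `(i,j)` with `i < j`. -/
inductive EdgeType : Type
  | forward
  | backward
  | bidirectional
  deriving DecidableEq

/-- An edge is a pair of endpoints `(i,j)` (with the convention `i < j`
for well-formed graphs) together with its type. -/
abbrev GEdge : Type := ℕ × ℕ × EdgeType

/-- A directed multigraph given by a list of edges, together with a
distinguished source and sink vertex. -/
structure LGraph : Type where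
  edges : List GEdge
  src : ℕ
  snk : ℕ

namespace LGraph

/-- The number of edges. -/
def m (G : LGraph) : ℕ := G.edges.length

/-- The smaller endpoint of the `e`-th edge. -/
def tail (G : LGraph) (e : Fin G.m) : ℕ := (G.edges.get e).1

/-- The larger endpoint of the `e`-th edge. -/
def head (G : LGraph) (e : Fin G.m) : ℕ := (G.edges.get e).2.1

/-- The type of the `e`-th edge. -/
def etype (G : LGraph) (e : Fin G.m) : EdgeType := (G.edges.get e).2.2

/-- Wellformedness: the graph has vertex set `{1,…,n}` and each edge `(i,j)`
satisfies `i < j`. -/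
def WF (G : LGraph) (n : ℕ) : Prop := ∀ e ∈ G.edges, 1 ≤ e.1 ∧ e.1 < e.2.1 ∧ e.2.1 ≤ n

/-- The netflow of `x` at the vertex `v`: total flow on edges `(v,k)`, `v < k`,
minus the total flow on edges `(i,v)`, `i < v`. -/
noncomputable def netflow (G : LGraph) (x : Fin G.m → ℝ) (v : ℕ) : ℝ :=
  ∑ e : Fin G.m, ((if G.tail e = v then x e else 0) - (if G.head e = v then x e else 0))

/-- The set of `u`-flows on `G`, where `u = e_src - e_snk`: the netflow is `1` at the
source, `-1` at the sink and `0` elsewhere, flows on forward edges are nonnegative and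
flows on backward edges are nonpositive (bidirectional edges unrestricted).  This is
the flow polytope `F_G ⊆ ℝ^m`. -/
def flowSet (G : LGraph) : Set (Fin G.m → ℝ) :=
  { x | (∀ v : ℕ, G.netflow x v = (if v = G.src then (1 : ℝ) else 0) - (if v = G.snk then 1 else 0))
      ∧ ∀ e : Fin G.m, (G.etype e = .forward → 0 ≤ x e) ∧ (G.etype e = .backward → x e ≤ 0) }

/-- One step of a directed walk: forward edges can be traversed from the smaller to the
larger endpoint, backward edges from the larger to the smaller, bidirectional edges both
ways. -/
def DStep (G : LGraph) (a b : ℕ) : Prop :=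
  ∃ e : Fin G.m, (G.tail e = a ∧ G.head e = b ∧ G.etype e ≠ .backward) ∨
                 (G.head e = a ∧ G.tail e = b ∧ G.etype e ≠ .forward)

/-- `G` is acyclic if it has no directed cycle. -/
def Acyclic (G : LGraph) : Prop := ∀ v : ℕ, ¬ Relation.TransGen G.DStep v v

/-- One step in the underlying undirected graph. -/
def UStep (G : LGraph) (a b : ℕ) : Prop :=
  ∃ e : Fin G.m, (G.tail e = a ∧ G.head e = b) ∨ (G.head e = a ∧ G.tail e = b)

/-- `G` is connected (as an undirected graph on the vertex set `{1,…,n}`). -/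
def Connected (G : LGraph) (n : ℕ) : Prop :=
  ∀ a b : ℕ, 1 ≤ a → a ≤ n → 1 ≤ b → b ≤ n → Relation.ReflTransGen G.UStep a b

/-- The starting vertex of a traversal step `(e, d)`: `d = true` means the edge `e` is
traversed from its smaller to its larger endpoint. -/
def sv (G : LGraph) (s : Fin G.m × Bool) : ℕ := if s.2 then G.tail s.1 else G.head s.1

/-- The ending vertex of a traversal step. -/
def ev (G : LGraph) (s : Fin G.m × Bool) : ℕ := if s.2 then G.head s.1 else G.tail s.1

/-- A route of `G`: a directed path from the source to the sink (not repeating edges),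
traversing each edge in a direction allowed by its type. -/
structure Route (G : LGraph) : Type where
  steps : List (Fin G.m × Bool)
  ne : steps ≠ []
  chain : steps.Chain' (fun s t => G.ev s = G.sv t)
  first : G.sv (steps.head ne) = G.src
  last : G.ev (steps.getLast ne) = G.snk
  dir : ∀ s ∈ steps, (s.2 = true → G.etype s.1 ≠ .backward) ∧ (s.2 = false → G.etype s.1 ≠ .forward)
  nodup : (steps.map Prod.fst).Nodup

/-- The signed characteristic vector of a route: `+1` on edges traversed from smaller to
larger endpoint, `-1` on edges traversed from larger to smaller endpoint, `0` on unused
edges. -/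
noncomputable def Route.vec {G : LGraph} (R : Route G) : Fin G.m → ℝ := fun e =>
  if (e, true) ∈ R.steps then 1 else if (e, false) ∈ R.steps then -1 else 0

end LGraph

/-- A point of `ℝ^α` is a lattice point if all its coordinates are integers. -/
def IsLatticePt {α : Type*} (x : α → ℝ) : Prop := ∀ i, ∃ z : ℤ, x i = (z : ℝ)

/-- Integral equivalence of two subsets `P ⊆ ℝ^α`, `Q ⊆ ℝ^β`: an affine map `φ` restricting
to a bijection from `P` onto `Q` and to a bijection between the lattice points of the
affine hull of `P` and those of the affine hull of `Q`. -/
def IntEquiv {α β : Type*} (P : Set (α → ℝ)) (Q : Set (β → ℝ)) : Prop :=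
  ∃ φ : (α → ℝ) →ᵃ[ℝ] (β → ℝ),
    Set.BijOn φ P Q ∧
    Set.BijOn φ ({x | IsLatticePt x} ∩ (affineSpan ℝ P : Set (α → ℝ)))
                ({x | IsLatticePt x} ∩ (affineSpan ℝ Q : Set (β → ℝ)))

/-! ### Lattice paths and the canonical indexing -/

/-- A lattice path is a list of letters, `true` = E-step `(1,0)`, `false` = N-step `(0,1)`.
`ovl ν` is the path `ν̄ = E ν N`. -/
def ovl (ν : List Bool) : List Bool := true :: ν ++ [false]

/-- Auxiliary function for the canonical indexing: `prev` is the previous letter,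
`k` is the last index used. -/
def canonIdxAux : List Bool → Bool → ℕ → List ℕ
  | [], _, _ => []
  | c :: rest, prev, k =>
    if prev && !c then k :: canonIdxAux rest c k
    else (k + 1) :: canonIdxAux rest c (k + 1)

/-- The canonical indexing of a word in `{E,N}`: reading left to right, each letter
receives the next positive integer, except that the first `N` of a maximal run of `N`s
receives the index of the immediately preceding `E` step. -/
def canonIdx (w : List Bool) : List ℕ := canonIdxAux w false 0

/-- The letter at position `p` (`true` = E). -/
def letterAt (w : List Bool) (p : ℕ) : Bool := w.getD p false

/-- The canonical index of the letter at position `p`. -/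
def idxAt (w : List Bool) (p : ℕ) : ℕ := (canonIdx w).getD p 0

/-- The largest canonical index `n` of the word `w`. -/
def nIdx (w : List Bool) : ℕ := idxAt w (w.length - 1)

/-- The set `I` of indices of E steps. -/
def Iset (w : List Bool) : Finset ℕ :=
  (((List.range w.length).filter (fun p => letterAt w p)).map (idxAt w)).toFinset

/-- The set `J` of indices of N steps. -/
def Jset (w : List Bool) : Finset ℕ :=
  (((List.range w.length).filter (fun p => !letterAt w p)).map (idxAt w)).toFinset

/-- The set `I ∩ J` of indices of valleys. -/
def Vset (w : List Bool) : Finset ℕ := Iset w ∩ Jset w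

/-- The valleys `v_1 < v_2 < ⋯ < v_w` as a sorted list. -/
def valleyList (w : List Bool) : List ℕ := (Vset w).sort (· ≤ ·)

/-- The number `w` of valleys. -/
def numVal (w : List Bool) : ℕ := (valleyList w).length

/-- The `k`-th valley `v_k` (`1 ≤ k ≤ numVal w`). -/
def vv (w : List Bool) (k : ℕ) : ℕ := (valleyList w).getD (k - 1) 0

/-! ### The ν-graph, its bidirectional version and partial augmentations -/

/-- `(i,j)` is an edge of the ν-graph iff `E_i ⋯ N_j` is a consecutive subword of `w`
whose only valleys are `E_k N_k` with `k = i` or `k = j`. -/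
def isNuEdgeB (w : List Bool) (i j : ℕ) : Bool :=
  (List.range w.length).any fun p =>
    (List.range w.length).any fun q =>
      decide (p < q) && letterAt w p && !letterAt w q &&
      decide (idxAt w p = i) && decide (idxAt w q = j) &&
      ((List.range w.length).all fun r =>
        !(decide (p ≤ r) && decide (r + 1 ≤ q) && letterAt w r && !letterAt w (r + 1)) ||
        decide (idxAt w r = i) || decide (idxAt w r = j))

/-- The list of edges `(i,j)`, `i < j`, of the ν-graph `G(ν)` (where `w = ν̄`). -/
def nuEdgePairs (w : List Bool) : List (ℕ × ℕ) :=
  ((List.range (nIdx w + 1)).flatMap fun i =>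
    (List.range (nIdx w + 1)).map fun j => (i, j)).filter
    fun p => decide (p.1 < p.2) && isNuEdgeB w p.1 p.2

/-- The edges of `G(ν)`, all forward. -/
def Gedges (w : List Bool) : List GEdge :=
  (nuEdgePairs w).map fun p => (p.1, p.2, EdgeType.forward)

/-- The edges of the bidirectional ν-graph `G_B(ν)`: an edge is bidirectional exactly
when both of its endpoints lie in `I ∩ J`. -/
def GBedges (w : List Bool) : List GEdge :=
  (nuEdgePairs w).map fun p =>
    (p.1, p.2, if p.1 ∈ Vset w ∧ p.2 ∈ Vset w then EdgeType.bidirectional else EdgeType.forward)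

/-- Out-degree of a vertex in an edge list: the number of edges traversable out of `v`. -/
def outDegL (E : List GEdge) (v : ℕ) : ℕ :=
  (E.filter fun e => (decide (e.1 = v) && decide (e.2.2 ≠ EdgeType.backward)) ||
                     (decide (e.2.1 = v) && decide (e.2.2 ≠ EdgeType.forward))).length

/-- In-degree of a vertex in an edge list: the number of edges traversable into `v`. -/
def inDegL (E : List GEdge) (v : ℕ) : ℕ :=
  (E.filter fun e => (decide (e.2.1 = v) && decide (e.2.2 ≠ EdgeType.backward)) ||
                     (decide (e.1 = v) && decide (e.2.2 ≠ EdgeType.forward))).length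

/-- The full augmentation of an edge list on inner vertices `1,…,n`: add a source `s = 0`
and a sink `t = n+1` together with forward edges `(s,i)` and `(i,t)` for all `i`. -/
def fullAug (n : ℕ) (E : List GEdge) : List GEdge :=
  E ++ ((List.range n).map fun i => (0, i + 1, EdgeType.forward))
    ++ ((List.range n).map fun i => (i + 1, n + 1, EdgeType.forward))

/-- The partial augmentation: the full augmentation with the edges `(s,i)` for which `i`
has out-degree one, and the edges `(j,t)` for which `j` has in-degree one, removed. -/
def partAug (n : ℕ) (E : List GEdge) : List GEdge :=
  E ++ ((List.range n).filterMap fun i =>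
          if outDegL (fullAug n E) (i + 1) = 1 then none else some (0, i + 1, EdgeType.forward))
    ++ ((List.range n).filterMap fun j =>
          if inDegL (fullAug n E) (j + 1) = 1 then none else some (j + 1, n + 1, EdgeType.forward))

/-- The graph `G̃_B(ν)`: the partial augmentation of the bidirectional ν-graph, with
source `s = 0` and sink `t = n+1`. -/
def GBt (w : List Bool) : LGraph := ⟨partAug (nIdx w) (GBedges w), 0, nIdx w + 1⟩

/-- The graph `G̃(ν)`: the partial augmentation of the ν-graph. -/
def Gt (w : List Bool) : LGraph := ⟨partAug (nIdx w) (Gedges w), 0, nIdx w + 1⟩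

/-- The edges of the graph `G(ν,k)`: the bidirectional path of `G_B(ν)` is replaced by
`C_ν(k)`, i.e. all edges are made forward, the forward edge `(v_k, v_{k+1})` is removed
and the backward edge `(v_1, v_w)` is added when `k < w` (for `k = w` nothing changes). -/
def GnuIedges (w : List Bool) (k : ℕ) : List GEdge :=
  ((nuEdgePairs w).filterMap fun p =>
    if k < numVal w ∧ p = (vv w k, vv w (k + 1)) then none
    else some (p.1, p.2, EdgeType.forward))
  ++ (if k < numVal w then [(vv w 1, vv w (numVal w), EdgeType.backward)] else [])

/-- The graph `G̃(ν,k)`: the partial augmentation of `G(ν,k)`. -/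
def Gnut (w : List Bool) (k : ℕ) : LGraph := ⟨partAug (nIdx w) (GnuIedges w k), 0, nIdx w + 1⟩

/-- All candidate edges on the vertex set `{0,1,…,n+1}`. -/
def allCand (n : ℕ) : List GEdge :=
  (List.range (n + 2)).flatMap fun a =>
    (List.range (n + 2)).flatMap fun b =>
      [(a, b, EdgeType.forward), (a, b, EdgeType.backward), (a, b, EdgeType.bidirectional)]

/-- The intersection `∩_{k ∈ S} G̃(ν,k)` of the partial augmentations of the graphs
`G(ν,k)`, `k ∈ S`, as a graph with source `0` and sink `n+1`. -/
def interGraph (w : List Bool) (S : Finset ℕ) : LGraph :=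
  ⟨(allCand (nIdx w)).filter fun e =>
      decide (∀ k ∈ S, e ∈ partAug (nIdx w) (GnuIedges w k)), 0, nIdx w + 1⟩

/-! ### The polytopes `Q_i` -/

/-- The condition on a route of `G̃_B(ν)` defining `Q_k` (`1 ≤ k < w`): the route does not
traverse the bidirectional edge `(v_k, v_{k+1})` forward, and traverses it backward
whenever it traverses any bidirectional edge backward. -/
def QRoute (w : List Bool) (k : ℕ) (R : LGraph.Route (GBt w)) : Prop :=
  (∀ e : Fin (GBt w).m, (GBt w).tail e = vv w k → (GBt w).head e = vv w (k + 1) →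
      (e, true) ∉ R.steps) ∧
  ((∃ s ∈ R.steps, s.2 = false) →
      ∃ e : Fin (GBt w).m, (GBt w).tail e = vv w k ∧ (GBt w).head e = vv w (k + 1) ∧
        (e, false) ∈ R.steps)

/-- The polytope `Q_k` for `1 ≤ k ≤ w`.  For `k < w` it is the convex hull of the signed
characteristic vectors of the routes satisfying `QRoute`, and `Q_w` is the flow polytope
`F_{G̃(ν)}` viewed inside `F_{G̃_B(ν)}` (the nonnegative flows). -/
def Qset (w : List Bool) (k : ℕ) : Set (Fin (GBt w).m → ℝ) :=
  if k = numVal w then { x ∈ (GBt w).flowSet | ∀ e, 0 ≤ x e }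
  else convexHull ℝ { x | ∃ R : LGraph.Route (GBt w), QRoute w k R ∧ x = R.vec }

/-! ### Products of simplices -/

/-- The `i`-th standard basis vector. -/
def stdBasisVec {α : Type*} [DecidableEq α] (i : α) : α → ℝ := fun k => if k = i then 1 else 0

/-- The product of simplices `Δ_a × Δ_b = conv{(e_i, e_j)} ⊆ ℝ^{a+1} × ℝ^{b+1}`. -/
def prodSimplices (a b : ℕ) : Set ((Fin (a + 1) ⊕ Fin (b + 1)) → ℝ) :=
  convexHull ℝ { x | ∃ (i : Fin (a + 1)) (j : Fin (b + 1)),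
    x = Sum.elim (stdBasisVec i) (stdBasisVec j) }

/-! ### Arcs and (I,J)-trees -/

/-- An arc on `w`: a pair `(i,j)` with `i ∈ I` and `j ∈ J`. -/
def IsArc (w : List Bool) (p : ℕ × ℕ) : Prop := p.1 ∈ Iset w ∧ p.2 ∈ Jset w

/-- The six configurations in which the arcs `(i,j) = p` and `(i',j') = q` cyclically
cross. -/
def CycCrossRaw (p q : ℕ × ℕ) : Prop :=
  (p.1 < q.1 ∧ q.1 < p.2 ∧ p.2 < q.2) ∨   -- i < i' < j < j'
  (q.2 < p.1 ∧ p.1 < q.1 ∧ q.1 < p.2) ∨   -- j' < i < i' < j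
  (p.2 < q.2 ∧ q.2 < p.1 ∧ p.1 < q.1) ∨   -- j < j' < i < i'
  (q.1 < p.2 ∧ p.2 < q.2 ∧ q.2 < p.1) ∨   -- i' < j < j' < i
  (p.1 < q.2 ∧ q.2 < q.1 ∧ q.1 < p.2) ∨   -- i < j' < i' < j
  (p.2 < p.1 ∧ p.1 < q.2 ∧ q.2 < q.1)     -- j < i < j' < i'

/-- Two arcs cyclically cross (up to swapping the roles of the two arcs). -/
def CycCross (p q : ℕ × ℕ) : Prop := CycCrossRaw p q ∨ CycCrossRaw q p

/-- A cyclic (I,J)-forest: a set of pairwise cyclically non-crossing arcs. -/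
def CycForest (w : List Bool) (F : Set (ℕ × ℕ)) : Prop :=
  (∀ p ∈ F, IsArc w p) ∧ ∀ p ∈ F, ∀ q ∈ F, p ≠ q → ¬ CycCross p q

/-- A cyclic (I,J)-tree: a maximal cyclic (I,J)-forest. -/
def CycTree (w : List Bool) (T : Set (ℕ × ℕ)) : Prop :=
  CycForest w T ∧ ∀ T', CycForest w T' → T ⊆ T' → T' = T

/-- An increasing (I,J)-forest: a cyclic (I,J)-forest all of whose arcs are increasing
or minimal. -/
def IncForest (w : List Bool) (F : Set (ℕ × ℕ)) : Prop :=
  CycForest w F ∧ ∀ p ∈ F, p.1 ≤ p.2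

/-- An increasing (I,J)-tree: a maximal increasing (I,J)-forest. -/
def IncTree (w : List Bool) (T : Set (ℕ × ℕ)) : Prop :=
  IncForest w T ∧ ∀ T', IncForest w T' → T ⊆ T' → T' = T

/-- Two edges `(a,b)` and `(c,d)` with `a < b`, `c < d` cross if `a < c < b < d` or
`c < a < d < b`. -/
def CrossE (p q : ℕ × ℕ) : Prop :=
  (p.1 < q.1 ∧ q.1 < p.2 ∧ p.2 < q.2) ∨ (q.1 < p.1 ∧ p.1 < q.2 ∧ q.2 < p.2)

/-- A graph on `I ∪ J` whose edges `(i,j)` satisfy `i ∈ I`, `j ∈ J`, `i < j`, which is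
alternating (every vertex is a source or a sink) and non-crossing. -/
def AltNC (w : List Bool) (H : Set (ℕ × ℕ)) : Prop :=
  (∀ p ∈ H, p.1 ∈ Iset w ∧ p.2 ∈ Jset w ∧ p.1 < p.2) ∧
  (∀ v : ℕ, (∀ p ∈ H, p.2 ≠ v) ∨ (∀ p ∈ H, p.1 ≠ v)) ∧
  (∀ p ∈ H, ∀ q ∈ H, p ≠ q → ¬ CrossE p q)

/-- The set `D_ν̄`: maximal alternating non-crossing graphs. -/
def Dnu (w : List Bool) (H : Set (ℕ × ℕ)) : Prop :=
  AltNC w H ∧ ∀ H', AltNC w H' → H ⊆ H' → H' = H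

/-- A maximal arc: `(1,n)`, or an arc `(i,j)` with `j < i` and no index strictly
between `j` and `i`. -/
def MaxArc (w : List Bool) (p : ℕ × ℕ) : Prop :=
  (p.1 = 1 ∧ p.2 = nIdx w) ∨
  (p.2 < p.1 ∧ ∀ k ∈ Iset w ∪ Jset w, ¬ (p.2 < k ∧ k < p.1))

/-! ### Cyclic peaks and rotations -/

/-- The positions `r` of the (non-wrap-around) cyclic peaks: `N` at `r` and `E` at `r+1`. -/
def peakPositions (w : List Bool) : List ℕ :=
  (List.range w.length).filter fun r => !letterAt w r && letterAt w (r + 1)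

/-- The position of the `E` step of the `l`-th cyclic peak (`1 ≤ l ≤ w`); the `w`-th
cyclic peak is the wrap-around peak, whose `E` step is at position `0`. -/
def shiftPos (w : List Bool) (l : ℕ) : ℕ :=
  if l = numVal w then 0 else (peakPositions w).getD (l - 1) 0 + 1

/-- The word `ν̄(l)` obtained by cyclically shifting `w = ν̄` to start at the `E` step of
the `l`-th cyclic peak. -/
def rotWord (w : List Bool) (l : ℕ) : List Bool :=
  w.drop (shiftPos w l) ++ w.take (shiftPos w l)

/-- The effect of the rotation on positions. -/
def rotPos (w : List Bool) (l : ℕ) (p : ℕ) : ℕ :=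
  (p + w.length - shiftPos w l) % w.length

/-- The position of the `E` step with index `i`. -/
def Epos (w : List Bool) (i : ℕ) : ℕ :=
  (((List.range w.length).filter fun p => letterAt w p && decide (idxAt w p = i))).headD 0

/-- The position of the `N` step with index `j`. -/
def Npos (w : List Bool) (j : ℕ) : ℕ :=
  (((List.range w.length).filter fun p => !letterAt w p && decide (idxAt w p = j))).headD 0

/-- The map induced on arcs by the cyclic rotation taking `ν̄` to `ν̄(l)`. -/
def arcMap (w : List Bool) (l : ℕ) (p : ℕ × ℕ) : ℕ × ℕ :=
  (idxAt (rotWord w l) (rotPos w l (Epos w p.1)),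
   idxAt (rotWord w l) (rotPos w l (Npos w p.2)))

/-- The arc determined by the `l`-th cyclic peak. -/
def peakArc (w : List Bool) (l : ℕ) : ℕ × ℕ :=
  if l = numVal w then (1, nIdx w)
  else (idxAt w ((peakPositions w).getD (l - 1) 0 + 1), idxAt w ((peakPositions w).getD (l - 1) 0))

end FP

namespace StmtAux
open FP

open scoped Classical in
noncomputable def ht (n : ℕ) (G : LGraph) (v : ℕ) : ℕ :=
  ((Finset.Icc 1 n).filter (fun u => Relation.TransGen G.DStep u v)).card

noncomputable def sg (n : ℕ) (G : LGraph) (v : ℕ) : ℕ := 2 + ht n G v * (n + 1) + v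

def NV (n : ℕ) : ℕ := n * n + 2 * n + 3

section

variable (n : ℕ) (G : LGraph)

lemma mem_edges (e : Fin G.m) : G.edges.get e ∈ G.edges := by
  have := List.get_mem G.edges e
  simpa using this

lemma bounds (hwf : G.WF n) (e : Fin G.m) :
    1 ≤ G.tail e ∧ G.tail e < G.head e ∧ G.head e ≤ n :=
  hwf _ (mem_edges G e)

lemma dstep_bound (hwf : G.WF n) {a b : ℕ} (h : G.DStep a b) :
    1 ≤ a ∧ a ≤ n ∧ 1 ≤ b ∧ b ≤ n := by
  obtain ⟨e, h | h⟩ := h <;>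
  · obtain ⟨h1, h2, -⟩ := h
    have hb := bounds n G hwf e
    omega

lemma ht_mono (hwf : G.WF n) (hacyc : G.Acyclic) {a b : ℕ} (h : G.DStep a b) :
    ht n G a < ht n G b := by
  classical
  apply Finset.card_lt_card
  have hsub : ((Finset.Icc 1 n).filter (fun u => Relation.TransGen G.DStep u a)) ⊆
      ((Finset.Icc 1 n).filter (fun u => Relation.TransGen G.DStep u b)) := by
    intro u hu
    rw [Finset.mem_filter] at hu ⊢
    exact ⟨hu.1, hu.2.tail h⟩
  rw [Finset.ssubset_iff_of_subset hsub]
  refine ⟨a, ?_, ?_⟩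
  · rw [Finset.mem_filter]
    have hb := dstep_bound n G hwf h
    exact ⟨Finset.mem_Icc.2 ⟨hb.1, hb.2.1⟩, Relation.TransGen.single h⟩
  · rw [Finset.mem_filter]
    rintro ⟨-, hcyc⟩
    exact hacyc a hcyc

lemma ht_le (v : ℕ) : ht n G v ≤ n := by
  classical
  refine le_trans (Finset.card_filter_le _ _) ?_
  simp [Nat.card_Icc]

lemma sg_mono (hwf : G.WF n) (hacyc : G.Acyclic) {a b : ℕ} (h : G.DStep a b) :
    sg n G a < sg n G b := by
  have h1 := ht_mono n G hwf hacyc h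
  have h2 := (dstep_bound n G hwf h).2.1
  have h3 : (ht n G a + 1) * (n + 1) ≤ ht n G b * (n + 1) :=
    Nat.mul_le_mul_right _ h1
  rw [add_mul, one_mul] at h3
  unfold sg
  omega

lemma sg_le {v : ℕ} (hv : v ≤ n) : sg n G v ≤ n * n + 2 * n + 2 := by
  have h1 := ht_le n G v
  have h3 : ht n G v * (n + 1) ≤ n * (n + 1) := Nat.mul_le_mul_right _ h1
  have h4 : n * (n + 1) = n * n + n := by ring
  unfold sg
  omega

lemma sg_ge (v : ℕ) : 2 + v ≤ sg n G v := by unfold sg; omega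

lemma sg_lt_NV {v : ℕ} (hv : v ≤ n) : sg n G v < NV n := by
  have := sg_le n G hv
  unfold NV
  omega

lemma sg_inj {u v : ℕ} (hu : u ≤ n) (hv : v ≤ n) (h : sg n G u = sg n G v) : u = v := by
  unfold sg at h
  have heq : u + ht n G u * (n + 1) = v + ht n G v * (n + 1) := by omega
  have h' := congrArg (· % (n + 1)) heq
  rw [Nat.add_mul_mod_self_right, Nat.add_mul_mod_self_right,
    Nat.mod_eq_of_lt (by omega), Nat.mod_eq_of_lt (by omega)] at h'
  exact h'

lemma no_bidir (hacyc : G.Acyclic) (e : Fin G.m) : G.etype e ≠ .bidirectional := by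
  intro hb
  refine hacyc (G.tail e) (Relation.TransGen.head ⟨e, Or.inl ⟨rfl, rfl, ?_⟩⟩
    (Relation.TransGen.single ⟨e, Or.inr ⟨rfl, rfl, ?_⟩⟩)) <;>
  · rw [hb]; intro h; exact EdgeType.noConfusion h


noncomputable def emap (n : ℕ) (G : LGraph) : GEdge → GEdge := fun p =>
  if p.2.2 = EdgeType.backward then (sg n G p.2.1, sg n G p.1, EdgeType.forward)
  else (sg n G p.1, sg n G p.2.1, EdgeType.forward)

noncomputable def ff (n : ℕ) (G : LGraph) : Fin (G.m + 2) → GEdge := fun k =>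
  if h : (k : ℕ) < G.m then emap n G (G.edges.get ⟨k, h⟩)
  else if (k : ℕ) = G.m then (1, sg n G 1, EdgeType.forward)
  else (sg n G n, NV n, EdgeType.forward)

noncomputable def G2 (n : ℕ) (G : LGraph) : LGraph := ⟨List.ofFn (ff n G), 1, NV n⟩

lemma m2 (n : ℕ) (G : LGraph) : (G2 n G).m = G.m + 2 := by
  show (List.ofFn (ff n G)).length = G.m + 2; exact List.length_ofFn

noncomputable def sgn (G : LGraph) (e : Fin G.m) : ℝ :=
  if G.etype e = .backward then -1 else 1

lemma sgn_ne (G : LGraph) (e : Fin G.m) : sgn G e ≠ 0 := by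
  unfold sgn; split_ifs <;> norm_num

lemma sgn_sq (G : LGraph) (e : Fin G.m) : sgn G e * sgn G e = 1 := by
  unfold sgn; split_ifs <;> norm_num

section

variable (n : ℕ) (G : LGraph)

def embE (e : Fin G.m) : Fin (G2 n G).m := ⟨e, by rw [m2]; omega⟩
def idm : Fin (G2 n G).m := ⟨G.m, by rw [m2]; omega⟩
def idm1 : Fin (G2 n G).m := ⟨G.m + 1, by rw [m2]; omega⟩

lemma get2 (e : Fin (G2 n G).m) :
    (G2 n G).edges.get e = ff n G ⟨(e : ℕ), lt_of_lt_of_eq e.2 (m2 n G)⟩ := by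
  show (List.ofFn (ff n G))[(e : ℕ)]'e.2 = _
  exact List.getElem_ofFn ..

lemma get_emb (e : Fin G.m) :
    (G2 n G).edges.get (embE n G e) = emap n G (G.edges.get e) := by
  rw [get2]
  show ff n G ⟨(e : ℕ), _⟩ = _
  unfold ff
  rw [dif_pos e.2]
  rfl

lemma tail2_emb (e : Fin G.m) :
    (G2 n G).tail (embE n G e) =
      if G.etype e = EdgeType.backward then sg n G (G.head e) else sg n G (G.tail e) := by
  show ((G2 n G).edges.get (embE n G e)).1 = _
  rw [get_emb]
  unfold emap LGraph.etype LGraph.head LGraph.tail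
  split_ifs <;> rfl

lemma head2_emb (e : Fin G.m) :
    (G2 n G).head (embE n G e) =
      if G.etype e = EdgeType.backward then sg n G (G.tail e) else sg n G (G.head e) := by
  show ((G2 n G).edges.get (embE n G e)).2.1 = _
  rw [get_emb]
  unfold emap LGraph.etype LGraph.head LGraph.tail
  split_ifs <;> rfl

lemma get_idm : (G2 n G).edges.get (idm n G) = (1, sg n G 1, EdgeType.forward) := by
  rw [get2]
  show ff n G ⟨G.m, _⟩ = _
  unfold ff
  rw [dif_neg (lt_irrefl G.m), if_pos rfl]

lemma get_idm1 : (G2 n G).edges.get (idm1 n G) = (sg n G n, NV n, EdgeType.forward) := by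
  rw [get2]
  show ff n G ⟨G.m + 1, _⟩ = _
  unfold ff
  rw [dif_neg (show ¬ (G.m + 1 < G.m) by omega), if_neg (show ¬ (G.m + 1 = G.m) by omega)]

lemma etype2_all (e : Fin (G2 n G).m) : (G2 n G).etype e = EdgeType.forward := by
  show ((G2 n G).edges.get e).2.2 = _
  rw [get2]
  unfold ff emap
  split_ifs <;> rfl

lemma WF2 (hn : 2 ≤ n) (hwf : G.WF n) (hacyc : G.Acyclic) : (G2 n G).WF (NV n) := by
  intro ed hed
  rw [show (G2 n G).edges = List.ofFn (ff n G) from rfl, List.mem_ofFn] at hed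
  obtain ⟨k, rfl⟩ := hed
  unfold ff
  split_ifs with h1 h2
  · set e : Fin G.m := ⟨k, h1⟩ with he
    have hb := bounds n G hwf e
    unfold emap
    have htl : (G.edges.get e).1 = G.tail e := rfl
    have hhd : (G.edges.get e).2.1 = G.head e := rfl
    have het : (G.edges.get e).2.2 = G.etype e := rfl
    split_ifs with hbk
    · change G.etype e = EdgeType.backward at hbk
      have hstep : G.DStep (G.head e) (G.tail e) :=
        ⟨e, Or.inr ⟨rfl, rfl, by rw [hbk]; intro h; exact EdgeType.noConfusion h⟩⟩
      have hmono := sg_mono n G hwf hacyc hstep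
      have hle := sg_lt_NV n G (v := G.tail e) (by omega)
      have hge := sg_ge n G (G.head e)
      show 1 ≤ sg n G (G.head e) ∧ sg n G (G.head e) < sg n G (G.tail e) ∧ sg n G (G.tail e) ≤ NV n
      exact ⟨by omega, hmono, by omega⟩
    · change ¬ G.etype e = EdgeType.backward at hbk
      have hstep : G.DStep (G.tail e) (G.head e) := ⟨e, Or.inl ⟨rfl, rfl, hbk⟩⟩
      have hmono := sg_mono n G hwf hacyc hstep
      have hle := sg_lt_NV n G (v := G.head e) (by omega)
      have hge := sg_ge n G (G.tail e)
      show 1 ≤ sg n G (G.tail e) ∧ sg n G (G.tail e) < sg n G (G.head e) ∧ sg n G (G.head e) ≤ NV n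
      exact ⟨by omega, hmono, by omega⟩
  · have hge := sg_ge n G 1
    have hlt := sg_lt_NV n G (v := 1) (by omega)
    dsimp only
    exact ⟨le_refl 1, by omega, by omega⟩
  · have hge := sg_ge n G n
    have hlt := sg_lt_NV n G (v := n) (le_refl n)
    dsimp only
    exact ⟨by omega, by omega, le_refl _⟩

lemma tail_lt_head2 (hn : 2 ≤ n) (hwf : G.WF n) (hacyc : G.Acyclic)
    (e : Fin (G2 n G).m) : (G2 n G).tail e < (G2 n G).head e :=
  (WF2 n G hn hwf hacyc _ (mem_edges _ e)).2.1

lemma acyclic2 (hn : 2 ≤ n) (hwf : G.WF n) (hacyc : G.Acyclic) : (G2 n G).Acyclic := by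
  intro v hv
  have hlt : ∀ a b : ℕ, (G2 n G).DStep a b → a < b := by
    rintro a b ⟨e, ⟨h1, h2, -⟩ | ⟨-, -, h3⟩⟩
    · rw [← h1, ← h2]
      exact tail_lt_head2 n G hn hwf hacyc e
    · exact absurd (etype2_all n G e) h3
  have h2 : ∀ a b : ℕ, Relation.TransGen (G2 n G).DStep a b → a < b := by
    intro a b h
    induction h with
    | single h => exact hlt _ _ h
    | tail _ h ih => exact lt_trans ih (hlt _ _ h)
  exact lt_irrefl v (h2 v v hv)

end

noncomputable def lin (n : ℕ) (G : LGraph) : (Fin G.m → ℝ) →ₗ[ℝ] (Fin (G2 n G).m → ℝ) where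
  toFun x := fun e => if h : (e : ℕ) < G.m then sgn G ⟨e, h⟩ * x ⟨e, h⟩ else 0
  map_add' x y := by
    funext e
    by_cases h : (e : ℕ) < G.m <;> simp [h, mul_add]
  map_smul' c x := by
    funext e
    by_cases h : (e : ℕ) < G.m <;> simp [h] <;> ring

noncomputable def cvec (n : ℕ) (G : LGraph) : Fin (G2 n G).m → ℝ :=
  fun e => if (e : ℕ) < G.m then 0 else 1

noncomputable def phi (n : ℕ) (G : LGraph) : (Fin G.m → ℝ) →ᵃ[ℝ] (Fin (G2 n G).m → ℝ) :=
  (lin n G).toAffineMap + AffineMap.const ℝ (Fin G.m → ℝ) (cvec n G)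

section
variable (n : ℕ) (G : LGraph)

lemma phi_apply (x : Fin G.m → ℝ) (e : Fin (G2 n G).m) :
    phi n G x e = if h : (e : ℕ) < G.m then sgn G ⟨e, h⟩ * x ⟨e, h⟩ else 1 := by
  have h0 : phi n G x e = lin n G x e + cvec n G e := rfl
  rw [h0]
  by_cases h : (e : ℕ) < G.m <;> simp [lin, cvec, h]

lemma phi_emb (x : Fin G.m → ℝ) (e : Fin G.m) :
    phi n G x (embE n G e) = sgn G e * x e := by
  rw [phi_apply, dif_pos (show ((embE n G e : ℕ)) < G.m from e.2)]
  rfl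

lemma phi_idm (x : Fin G.m → ℝ) : phi n G x (idm n G) = 1 := by
  rw [phi_apply]
  have h : ¬ ((idm n G : ℕ) < G.m) := by show ¬ (G.m < G.m); omega
  rw [dif_neg h]

lemma phi_idm1 (x : Fin G.m → ℝ) : phi n G x (idm1 n G) = 1 := by
  rw [phi_apply]
  have h : ¬ ((idm1 n G : ℕ) < G.m) := by show ¬ (G.m + 1 < G.m); omega
  rw [dif_neg h]

lemma tail2_idm : (G2 n G).tail (idm n G) = 1 := by
  unfold LGraph.tail; rw [get_idm]

lemma head2_idm : (G2 n G).head (idm n G) = sg n G 1 := by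
  unfold LGraph.head; rw [get_idm]

lemma tail2_idm1 : (G2 n G).tail (idm1 n G) = sg n G n := by
  unfold LGraph.tail; rw [get_idm1]

lemma head2_idm1 : (G2 n G).head (idm1 n G) = NV n := by
  unfold LGraph.head; rw [get_idm1]

end

lemma sum_fin_split {M M' : ℕ} (hM : M' = M + 2) (F : Fin M' → ℝ) :
    ∑ e, F e = (∑ i : Fin M, F ⟨i, by omega⟩) + F ⟨M, by omega⟩ + F ⟨M + 1, by omega⟩ := by
  subst hM
  rw [Fin.sum_univ_castSucc, Fin.sum_univ_castSucc]
  have h1 : ∀ i : Fin M, F (i.castSucc.castSucc) = F ⟨i, by omega⟩ :=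
    fun i => congrArg F (Fin.ext (by simp))
  have h2 : F ((Fin.last M).castSucc) = F ⟨M, by omega⟩ := congrArg F (Fin.ext (by simp))
  have h3 : F (Fin.last (M + 1)) = F ⟨M + 1, by omega⟩ := congrArg F (Fin.ext (by simp))
  rw [h2, h3, Finset.sum_congr rfl (fun i _ => h1 i)]

section
variable (n : ℕ) (G : LGraph)

lemma netflow2 (y : Fin (G2 n G).m → ℝ) (w : ℕ) :
    (G2 n G).netflow y w =
      (∑ e : Fin G.m,
        ((if (G2 n G).tail (embE n G e) = w then y (embE n G e) else 0)
         - (if (G2 n G).head (embE n G e) = w then y (embE n G e) else 0)))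
      + ((if 1 = w then y (idm n G) else 0) - (if sg n G 1 = w then y (idm n G) else 0))
      + ((if sg n G n = w then y (idm1 n G) else 0) - (if NV n = w then y (idm1 n G) else 0)) := by
  unfold LGraph.netflow
  rw [sum_fin_split (m2 n G)]
  have e2 : (if (G2 n G).tail (idm n G) = w then y (idm n G) else 0) -
      (if (G2 n G).head (idm n G) = w then y (idm n G) else 0)
      = (if 1 = w then y (idm n G) else 0) - (if sg n G 1 = w then y (idm n G) else 0) := by
    rw [tail2_idm, head2_idm]
  have e3 : (if (G2 n G).tail (idm1 n G) = w then y (idm1 n G) else 0) -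
      (if (G2 n G).head (idm1 n G) = w then y (idm1 n G) else 0)
      = (if sg n G n = w then y (idm1 n G) else 0) - (if NV n = w then y (idm1 n G) else 0) := by
    rw [tail2_idm1, head2_idm1]
  refine congrArg₂ (· + ·) (congrArg₂ (· + ·) (Finset.sum_congr rfl (fun e _ => rfl)) e2) e3


lemma netflow_phi (x : Fin G.m → ℝ) (w : ℕ) :
    (G2 n G).netflow (phi n G x) w =
      (∑ e : Fin G.m, ((if sg n G (G.tail e) = w then x e else 0)
        - (if sg n G (G.head e) = w then x e else 0)))
      + ((if 1 = w then 1 else 0) - (if sg n G 1 = w then 1 else 0))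
      + ((if sg n G n = w then 1 else 0) - (if NV n = w then 1 else 0)) := by
  rw [netflow2, phi_idm, phi_idm1]
  refine congrArg₂ (· + ·) (congrArg₂ (· + ·) (Finset.sum_congr rfl (fun e _ => ?_)) rfl) rfl
  rw [phi_emb, tail2_emb, head2_emb]
  by_cases hb : G.etype e = EdgeType.backward
  · rw [if_pos hb, if_pos hb, show sgn G e = -1 from if_pos hb]
    split_ifs <;> ring
  · rw [if_neg hb, if_neg hb, show sgn G e = 1 from if_neg hb]
    split_ifs <;> ring

lemma tail2_emb_ge (e : Fin G.m) : 2 ≤ (G2 n G).tail (embE n G e) := by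
  rw [tail2_emb]
  split_ifs
  · have := sg_ge n G (G.head e); omega
  · have := sg_ge n G (G.tail e); omega

lemma head2_emb_ge (e : Fin G.m) : 2 ≤ (G2 n G).head (embE n G e) := by
  rw [head2_emb]
  split_ifs
  · have := sg_ge n G (G.tail e); omega
  · have := sg_ge n G (G.head e); omega

lemma tail2_emb_lt (hwf : G.WF n) (e : Fin G.m) : (G2 n G).tail (embE n G e) < NV n := by
  have hb := bounds n G hwf e
  rw [tail2_emb]
  split_ifs
  · exact sg_lt_NV n G (by omega)
  · exact sg_lt_NV n G (by omega)

lemma head2_emb_lt (hwf : G.WF n) (e : Fin G.m) : (G2 n G).head (embE n G e) < NV n := by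
  have hb := bounds n G hwf e
  rw [head2_emb]
  split_ifs
  · exact sg_lt_NV n G (by omega)
  · exact sg_lt_NV n G (by omega)

lemma hNV3 : 3 ≤ NV n := by unfold NV; omega

lemma y_idm (hn : 2 ≤ n) (hwf : G.WF n) (y : Fin (G2 n G).m → ℝ)
    (hy : y ∈ (G2 n G).flowSet) : y (idm n G) = 1 ∧ y (idm1 n G) = 1 := by
  obtain ⟨hy1, -⟩ := hy
  have h3 := hNV3 n
  have hg1 := sg_ge n G 1
  have hgn := sg_ge n G n
  constructor
  · have hval : (G2 n G).netflow y 1 = 1 := by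
      rw [hy1 1]
      show (if (1:ℕ) = 1 then (1:ℝ) else 0) - (if (1:ℕ) = NV n then 1 else 0) = 1
      rw [if_pos rfl, if_neg (by omega)]
      norm_num
    have h := netflow2 n G y 1
    rw [hval] at h
    have hsum : (∑ e : Fin G.m, ((if (G2 n G).tail (embE n G e) = 1 then y (embE n G e) else 0)
        - (if (G2 n G).head (embE n G e) = 1 then y (embE n G e) else 0))) = 0 :=
      Finset.sum_eq_zero fun e _ => by
        have ht := tail2_emb_ge n G e
        have hh := head2_emb_ge n G e
        rw [if_neg (by omega), if_neg (by omega)]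
        ring
    rw [hsum, if_pos rfl, if_neg (by omega : ¬ sg n G 1 = 1),
      if_neg (by omega : ¬ sg n G n = 1), if_neg (by omega : ¬ NV n = 1)] at h
    linarith
  · have hval : (G2 n G).netflow y (NV n) = -1 := by
      rw [hy1 (NV n)]
      show (if NV n = 1 then (1:ℝ) else 0) - (if NV n = NV n then 1 else 0) = -1
      rw [if_neg (by omega), if_pos rfl]
      norm_num
    have h := netflow2 n G y (NV n)
    rw [hval] at h
    have hsum : (∑ e : Fin G.m, ((if (G2 n G).tail (embE n G e) = NV n then y (embE n G e) else 0)
        - (if (G2 n G).head (embE n G e) = NV n then y (embE n G e) else 0))) = 0 :=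
      Finset.sum_eq_zero fun e _ => by
        have ht := tail2_emb_lt n G hwf e
        have hh := head2_emb_lt n G hwf e
        rw [if_neg (by omega), if_neg (by omega)]
        ring
    have hs1 := sg_lt_NV n G (show (1:ℕ) ≤ n by omega)
    have hsn := sg_lt_NV n G (le_refl n)
    rw [hsum, if_neg (by omega : ¬ (1:ℕ) = NV n), if_neg (by omega : ¬ sg n G 1 = NV n),
      if_neg (by omega : ¬ sg n G n = NV n), if_pos rfl] at h
    linarith

lemma netflow_sg (hn : 2 ≤ n) (hwf : G.WF n) (x : Fin G.m → ℝ) {v : ℕ}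
    (hv1 : 1 ≤ v) (hvn : v ≤ n) :
    (G2 n G).netflow (phi n G x) (sg n G v) =
      G.netflow x v - (if v = 1 then 1 else 0) + (if v = n then 1 else 0) := by
  rw [netflow_phi]
  have hsum : (∑ e : Fin G.m, ((if sg n G (G.tail e) = sg n G v then x e else 0)
      - (if sg n G (G.head e) = sg n G v then x e else 0))) = G.netflow x v := by
    unfold LGraph.netflow
    refine Finset.sum_congr rfl fun e _ => ?_
    have hb := bounds n G hwf e
    have h1 : (sg n G (G.tail e) = sg n G v) = (G.tail e = v) :=
      propext ⟨fun h => sg_inj n G (by omega) hvn h, fun h => by rw [h]⟩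
    have h2 : (sg n G (G.head e) = sg n G v) = (G.head e = v) :=
      propext ⟨fun h => sg_inj n G (by omega) hvn h, fun h => by rw [h]⟩
    simp only [h1, h2]
  have c1 : (if (1:ℕ) = sg n G v then (1:ℝ) else 0) = 0 :=
    if_neg (by have := sg_ge n G v; omega)
  have c2 : (if sg n G 1 = sg n G v then (1:ℝ) else 0) = (if v = 1 then 1 else 0) := by
    by_cases h : v = 1
    · subst h; rw [if_pos rfl, if_pos rfl]
    · rw [if_neg (fun hh => h ((sg_inj n G (by omega) hvn hh).symm)), if_neg h]
  have c3 : (if sg n G n = sg n G v then (1:ℝ) else 0) = (if v = n then 1 else 0) := by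
    by_cases h : v = n
    · subst h; rw [if_pos rfl, if_pos rfl]
    · rw [if_neg (fun hh => h ((sg_inj n G (le_refl n) hvn hh).symm)), if_neg h]
  have c4 : (if NV n = sg n G v then (1:ℝ) else 0) = 0 :=
    if_neg (by have := sg_lt_NV n G hvn; omega)
  rw [hsum, c1, c2, c3, c4]
  ring

lemma netflow_outside (hwf : G.WF n) (x : Fin G.m → ℝ) {v : ℕ} (hv : ¬ (1 ≤ v ∧ v ≤ n)) :
    G.netflow x v = 0 := by
  unfold LGraph.netflow
  refine Finset.sum_eq_zero fun e _ => ?_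
  have hb := bounds n G hwf e
  rw [if_neg (fun h => hv (by omega)), if_neg (fun h => hv (by omega))]
  ring

lemma mapsto (hn : 2 ≤ n) (hwf : G.WF n) (hacyc : G.Acyclic)
    (hsrc : G.src = 1) (hsnk : G.snk = n) :
    ∀ x ∈ G.flowSet, phi n G x ∈ (G2 n G).flowSet := by
  intro x hx
  obtain ⟨hx1, hx2⟩ := hx
  have h3 := hNV3 n
  constructor
  · intro w
    show _ = (if w = (1:ℕ) then (1:ℝ) else 0) - (if w = NV n then 1 else 0)
    by_cases hw : ∃ v, 1 ≤ v ∧ v ≤ n ∧ sg n G v = w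
    · obtain ⟨v, hv1, hvn, rfl⟩ := hw
      rw [netflow_sg n G hn hwf x hv1 hvn, hx1 v, hsrc, hsnk]
      have hA := sg_ge n G v
      have hB := sg_lt_NV n G hvn
      rw [if_neg (by omega : ¬ sg n G v = 1), if_neg (by omega : ¬ sg n G v = NV n)]
      split_ifs <;> ring
    · rw [netflow_phi]
      push_neg at hw
      have hsum : (∑ e : Fin G.m, ((if sg n G (G.tail e) = w then x e else 0)
          - (if sg n G (G.head e) = w then x e else 0))) = 0 :=
        Finset.sum_eq_zero fun e _ => by
          have hb := bounds n G hwf e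
          rw [if_neg (hw (G.tail e) (by omega) (by omega)),
            if_neg (hw (G.head e) (by omega) (by omega))]
          ring
      have c2 : (if sg n G 1 = w then (1:ℝ) else 0) = 0 := if_neg (hw 1 (le_refl 1) (by omega))
      have c3 : (if sg n G n = w then (1:ℝ) else 0) = 0 := if_neg (hw n (by omega) (le_refl n))
      rw [hsum, c2, c3]
      by_cases h1 : w = 1
      · subst h1
        rw [if_pos rfl, if_neg (by omega : ¬ NV n = 1), if_neg (by omega : ¬ (1:ℕ) = NV n)]
        ring
      · by_cases h2 : w = NV n
        · subst h2
          rw [if_neg (by omega : ¬ (1:ℕ) = NV n), if_neg h1, if_pos rfl]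
          ring
        · rw [if_neg (fun h => h1 h.symm), if_neg (fun h => h2 h.symm), if_neg h1, if_neg h2]
          ring
  · intro e
    constructor
    · intro _
      rw [phi_apply]
      by_cases h : (e : ℕ) < G.m
      · rw [dif_pos h]
        cases het : G.etype (⟨(e : ℕ), h⟩ : Fin G.m) with
        | forward =>
            rw [show sgn G ⟨(e : ℕ), h⟩ = 1 from
              if_neg (by rw [het]; exact fun hh => EdgeType.noConfusion hh)]
            have := (hx2 ⟨(e : ℕ), h⟩).1 het
            linarith
        | backward =>
            rw [show sgn G ⟨(e : ℕ), h⟩ = -1 from if_pos het]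
            have := (hx2 ⟨(e : ℕ), h⟩).2 het
            linarith
        | bidirectional => exact absurd het (no_bidir G hacyc ⟨(e : ℕ), h⟩)
      · rw [dif_neg h]
        norm_num
    · intro hbk
      have := etype2_all n G e
      rw [hbk] at this
      exact EdgeType.noConfusion this

lemma surj (hn : 2 ≤ n) (hwf : G.WF n) (hacyc : G.Acyclic)
    (hsrc : G.src = 1) (hsnk : G.snk = n) :
    ∀ y ∈ (G2 n G).flowSet, ∃ x ∈ G.flowSet, phi n G x = y := by
  intro y hy
  have hpos : ∀ e : Fin (G2 n G).m, 0 ≤ y e := fun e => (hy.2 e).1 (etype2_all n G e)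
  obtain ⟨h1, hN⟩ := y_idm n G hn hwf y hy
  have hphi : phi n G (fun e => sgn G e * y (embE n G e)) = y := by
    funext k
    rw [phi_apply]
    by_cases h : (k : ℕ) < G.m
    · rw [dif_pos h]
      show sgn G ⟨(k : ℕ), h⟩ * (sgn G ⟨(k : ℕ), h⟩ * y (embE n G ⟨(k : ℕ), h⟩)) = y k
      rw [← mul_assoc, sgn_sq, one_mul]
      exact congrArg y (Fin.ext rfl)
    · rw [dif_neg h]
      by_cases h2 : (k : ℕ) = G.m
      · rw [show k = idm n G from Fin.ext h2, h1]
      · have hk2 : (k : ℕ) = G.m + 1 := by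
          have := lt_of_lt_of_eq k.2 (m2 n G); omega
        rw [show k = idm1 n G from Fin.ext hk2, hN]
  refine ⟨fun e => sgn G e * y (embE n G e), ⟨?_, ?_⟩, hphi⟩
  · intro v
    by_cases hv : 1 ≤ v ∧ v ≤ n
    · have hnf := netflow_sg n G hn hwf (fun e => sgn G e * y (embE n G e)) hv.1 hv.2
      rw [hphi, hy.1 (sg n G v)] at hnf
      have hA := sg_ge n G v
      have hB := sg_lt_NV n G hv.2
      have hz : ((if sg n G v = (G2 n G).src then (1:ℝ) else 0)
          - (if sg n G v = (G2 n G).snk then 1 else 0)) = 0 := by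
        show ((if sg n G v = 1 then (1:ℝ) else 0) - (if sg n G v = NV n then 1 else 0)) = 0
        rw [if_neg (by omega), if_neg (by omega)]
        ring
      rw [hz] at hnf
      rw [hsrc, hsnk]
      split_ifs at hnf ⊢ <;> linarith
    · rw [netflow_outside n G hwf _ hv, hsrc, hsnk]
      have hn1 : ¬ v = 1 := fun h => hv (by subst h; omega)
      have hn2 : ¬ v = n := fun h => hv (by subst h; omega)
      rw [if_neg hn1, if_neg hn2]
      ring
  · intro e
    have hye := hpos (embE n G e)
    constructor
    · intro hf
      show 0 ≤ sgn G e * y (embE n G e)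
      rw [show sgn G e = 1 from
        if_neg (by rw [hf]; exact fun hh => EdgeType.noConfusion hh)]
      linarith
    · intro hbk
      show sgn G e * y (embE n G e) ≤ 0
      rw [show sgn G e = -1 from if_pos hbk]
      linarith

end
end
end StmtAux


open FP in
/-- If `G` is acyclic, there is an acyclic directed graph `G*` all of
whose edges are forward edges such that `F_G` is integrally equivalent to `F_{G*}`. -/
theorem stmt4 (n : ℕ) (hn : 2 ≤ n) (G : LGraph) (hsrc : G.src = 1) (hsnk : G.snk = n)
    (hwf : G.WF n) (hconn : G.Connected n) (hacyc : G.Acyclic) :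
    ∃ (n' : ℕ) (G' : LGraph), 2 ≤ n' ∧ G'.src = 1 ∧ G'.snk = n' ∧ G'.WF n' ∧
      (∀ e : Fin G'.m, G'.etype e = .forward) ∧ G'.Acyclic ∧
      IntEquiv G.flowSet G'.flowSet := by
  
  classical
  refine ⟨StmtAux.NV n, StmtAux.G2 n G, by unfold StmtAux.NV; omega, rfl, rfl,
    StmtAux.WF2 n G hn hwf hacyc, StmtAux.etype2_all n G,
    StmtAux.acyclic2 n G hn hwf hacyc, ?_⟩
  have hinj : Function.Injective (StmtAux.phi n G) := by
    intro a b hab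
    funext e
    have h := congrFun hab (StmtAux.embE n G e)
    rw [StmtAux.phi_emb, StmtAux.phi_emb] at h
    exact mul_left_cancel₀ (StmtAux.sgn_ne G e) h
  have hbij : Set.BijOn (StmtAux.phi n G) G.flowSet (StmtAux.G2 n G).flowSet :=
    ⟨StmtAux.mapsto n G hn hwf hacyc hsrc hsnk, hinj.injOn,
     fun y hy => StmtAux.surj n G hn hwf hacyc hsrc hsnk y hy⟩
  have himg : (StmtAux.G2 n G).flowSet = StmtAux.phi n G '' G.flowSet := hbij.image_eq.symm
  have hspan : (affineSpan ℝ ((StmtAux.G2 n G).flowSet) : Set (Fin (StmtAux.G2 n G).m → ℝ)) =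
      (StmtAux.phi n G) '' (affineSpan ℝ G.flowSet : Set (Fin G.m → ℝ)) := by
    rw [himg, ← AffineSubspace.map_span, AffineSubspace.coe_map]
  refine ⟨StmtAux.phi n G, hbij, ?_, hinj.injOn, ?_⟩
  · rintro x ⟨hlat, hsp⟩
    refine ⟨?_, ?_⟩
    · intro i
      rw [StmtAux.phi_apply]
      by_cases h : (i : ℕ) < G.m
      · rw [dif_pos h]
        obtain ⟨z, hz⟩ := hlat ⟨(i : ℕ), h⟩
        by_cases hbk : G.etype (⟨(i : ℕ), h⟩ : Fin G.m) = EdgeType.backward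
        · exact ⟨-z, by
            rw [show StmtAux.sgn G ⟨(i : ℕ), h⟩ = -1 from if_pos hbk, hz]
            push_cast
            ring⟩
        · exact ⟨z, by
            rw [show StmtAux.sgn G ⟨(i : ℕ), h⟩ = 1 from if_neg hbk, hz, one_mul]⟩
      · rw [dif_neg h]
        exact ⟨1, by norm_num⟩
    · show StmtAux.phi n G x ∈ (affineSpan ℝ ((StmtAux.G2 n G).flowSet) :
        Set (Fin (StmtAux.G2 n G).m → ℝ))
      rw [hspan]
      exact ⟨x, hsp, rfl⟩
  · rintro y ⟨hlat, hsp⟩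
    have hsp' : y ∈ StmtAux.phi n G '' (affineSpan ℝ G.flowSet : Set (Fin G.m → ℝ)) := by
      rw [← hspan]
      exact hsp
    obtain ⟨x, hx, rfl⟩ := hsp'
    refine ⟨x, ⟨?_, hx⟩, rfl⟩
    intro e
    obtain ⟨z, hz⟩ := hlat (StmtAux.embE n G e)
    rw [StmtAux.phi_emb] at hz
    by_cases hbk : G.etype e = EdgeType.backward
    · refine ⟨-z, ?_⟩
      rw [show StmtAux.sgn G e = -1 from if_pos hbk] at hz
      push_cast
      linarith
    · refine ⟨z, ?_⟩
      rw [show StmtAux.sgn G e = 1 from if_neg hbk, one_mul] at hz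
      exact hz
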